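/- Let λ, μ ∈ ℂ, b, c ∈ ℂ^{m-1}, and let B, C ∈ M(m-1, ℂ) with B upper triangular and C lower triangular. Assume λ is not an eigenvalue of B and μ is not an eigenvalue of C. Set A_0 = [[λ, 0], [b, B]] (block form, so A_0 is lower-triangular except for the vector b in the first column block) and A_1 = [[μ, cᵀ], [0, C]]. Suppose the m×m matrix [[1, cᵀ(μ−C)⁻¹],[0, I]] · [[1, 0],[(λ−B)⁻¹ b, I]] admits an LU decomposition [[l₁, 0],[l, L₂₂]] · [[u₁, uᵀ],[0, U₂₂]] with L₂₂ lower triangular, U₂₂ upper triangular, l₁ ≠ 0, and U₂₂ invertible. Define G = (l₁⁻¹ ⊕ U₂₂) · [[1, cᵀ(μ−C)⁻¹],[−(λ−B)⁻¹ b, I]]. Then G A_0 G⁻¹ = [[λ, −l₁⁻¹ cᵀ(μ−C)⁻¹(λ−B)U₂₂⁻¹],[0, U₂₂ B U₂₂⁻¹]] and G A_1 G⁻¹ = [[μ, 0],[−u₁⁻¹ L₂₂⁻¹(μ−C)(λ−B)⁻¹ b, L₂₂⁻¹ C L₂₂]]; in particular G A_0 G⁻¹ is upper triangular and G A_1 G⁻¹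 is lower triangular. -/

import Mathlib

open Matrix

/-- The LU-gauge proposition: the gauge matrix `G` built from the LU decomposition
conjugates `A₀ = [[λ,0],[b,B]]` to an upper triangular matrix and
`A₁ = [[μ,cᵀ],[0,C]]` to a lower triangular matrix, with the explicit block forms. -/
theorem LU_gauge (k : ℕ) (lam mu : ℂ)
    (b : Matrix (Fin k) (Fin 1) ℂ) (cT : Matrix (Fin 1) (Fin k) ℂ)
    (B C : Matrix (Fin k) (Fin k) ℂ)
    (hB : ∀ i j : Fin k, j < i → B i j = 0)
    (hC : ∀ i j : Fin k, i < j → C i j = 0)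
    (hlamB : IsUnit (lam • (1 : Matrix (Fin k) (Fin k) ℂ) - B))
    (hmuC : IsUnit (mu • (1 : Matrix (Fin k) (Fin k) ℂ) - C))
    (l1 u1 : ℂ) (lv : Matrix (Fin k) (Fin 1) ℂ) (uT : Matrix (Fin 1) (Fin k) ℂ)
    (L22 U22 : Matrix (Fin k) (Fin k) ℂ)
    (hL22 : ∀ i j : Fin k, i < j → L22 i j = 0)
    (hU22 : ∀ i j : Fin k, j < i → U22 i j = 0)
    (hl1 : l1 ≠ 0) (hU22unit : IsUnit U22)
    (hLU : fromBlocks (1 : Matrix (Fin 1) (Fin 1) ℂ)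
          (cT * (mu • (1 : Matrix (Fin k) (Fin k) ℂ) - C)⁻¹) 0 1 *
        fromBlocks (1 : Matrix (Fin 1) (Fin 1) ℂ) 0
          ((lam • (1 : Matrix (Fin k) (Fin k) ℂ) - B)⁻¹ * b) 1 =
        fromBlocks (l1 • (1 : Matrix (Fin 1) (Fin 1) ℂ)) 0 lv L22 *
        fromBlocks (u1 • (1 : Matrix (Fin 1) (Fin 1) ℂ)) uT 0 U22)
    (A0 A1 G : Matrix (Fin 1 ⊕ Fin k) (Fin 1 ⊕ Fin k) ℂ)
    (hA0 : A0 = fromBlocks (lam • (1 : Matrix (Fin 1) (Fin 1) ℂ)) 0 b B)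
    (hA1 : A1 = fromBlocks (mu • (1 : Matrix (Fin 1) (Fin 1) ℂ)) cT 0 C)
    (hG : G = fromBlocks (l1⁻¹ • (1 : Matrix (Fin 1) (Fin 1) ℂ)) 0 0 U22 *
        fromBlocks (1 : Matrix (Fin 1) (Fin 1) ℂ)
          (cT * (mu • (1 : Matrix (Fin k) (Fin k) ℂ) - C)⁻¹)
          (-((lam • (1 : Matrix (Fin k) (Fin k) ℂ) - B)⁻¹ * b)) 1) :
    G * A0 * G⁻¹ =
      fromBlocks (lam • (1 : Matrix (Fin 1) (Fin 1) ℂ))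
        (-(l1⁻¹ • (cT * (mu • (1 : Matrix (Fin k) (Fin k) ℂ) - C)⁻¹ *
            (lam • (1 : Matrix (Fin k) (Fin k) ℂ) - B) * U22⁻¹)))
        0 (U22 * B * U22⁻¹) ∧
    G * A1 * G⁻¹ =
      fromBlocks (mu • (1 : Matrix (Fin 1) (Fin 1) ℂ)) 0
        (-(u1⁻¹ • (L22⁻¹ * (mu • (1 : Matrix (Fin k) (Fin k) ℂ) - C) *
            (lam • (1 : Matrix (Fin k) (Fin k) ℂ) - B)⁻¹ * b)))
        (L22⁻¹ * C * L22) := by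
  have hRdet : IsUnit (lam • (1 : Matrix (Fin k) (Fin k) ℂ) - B).det :=
    (Matrix.isUnit_iff_isUnit_det _).mp hlamB
  have hQdet : IsUnit (mu • (1 : Matrix (Fin k) (Fin k) ℂ) - C).det :=
    (Matrix.isUnit_iff_isUnit_det _).mp hmuC
  set R := lam • (1 : Matrix (Fin k) (Fin k) ℂ) - B with hRdef
  set Q := mu • (1 : Matrix (Fin k) (Fin k) ℂ) - C with hQdef
  set S := R⁻¹ * b with hSdef
  set T := cT * Q⁻¹ with hTdef
  have hRS : R * S = b := by
    rw [hSdef, ← Matrix.mul_assoc, Matrix.mul_nonsing_inv R hRdet, Matrix.one_mul]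
  have hTQ : T * Q = cT := by
    rw [hTdef, Matrix.mul_assoc, Matrix.nonsing_inv_mul Q hQdet, Matrix.mul_one]
  rw [fromBlocks_multiply, fromBlocks_multiply, fromBlocks_inj] at hLU
  obtain ⟨e11, e12, e21, e22⟩ := hLU
  simp only [Matrix.one_mul, Matrix.mul_one, Matrix.zero_mul, Matrix.mul_zero, add_zero,
    zero_add, Matrix.smul_mul, Matrix.mul_smul, smul_smul] at e11 e12 e21 e22
  -- scalar facts
  have hu1 : u1 ≠ 0 := by
    intro h
    rw [h, zero_smul] at e21
    rw [e21, Matrix.mul_zero, h] at e11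
    have h0 := congrFun (congrFun e11 0) 0
    simp at h0
  have hl1u1 : u1 * l1 ≠ 0 := mul_ne_zero hu1 hl1
  set ts := (T * S) 0 0 with htsdef
  have hts : T * S = ts • (1 : Matrix (Fin 1) (Fin 1) ℂ) := by
    ext i j
    fin_cases i; fin_cases j
    simp [htsdef]
  have hl1u1ts : u1 * l1 = 1 + ts := by
    have h0 := congrFun (congrFun e11 0) 0
    simp [htsdef] at h0
    linear_combination -h0
  have hlv : lv = u1⁻¹ • S := by rw [e21, smul_smul, inv_mul_cancel₀ hu1, one_smul]
  have huT : uT = l1⁻¹ • T := by rw [e12, smul_smul, inv_mul_cancel₀ hl1, one_smul]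
  have hLUk : L22 * U22 = 1 - (u1⁻¹ * l1⁻¹) • (S * T) := by
    rw [hlv, huT, Matrix.smul_mul, Matrix.mul_smul, smul_smul] at e22
    exact (eq_sub_of_add_eq' e22.symm)
  have hSTS : S * (T * S) = ts • S := by rw [hts, Matrix.mul_smul, Matrix.mul_one]
  have halpha : (u1⁻¹ * l1⁻¹) * (1 + ts) = 1 := by
    rw [← hl1u1ts]; field_simp
  have hXX : (S * T) * (S * T) = ts • (S * T) := by
    rw [Matrix.mul_assoc, ← Matrix.mul_assoc T S T, hts, Matrix.smul_mul, Matrix.one_mul,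
      Matrix.mul_smul]
  have h2 : (L22 * U22) * (1 + S * T) = 1 := by
    rw [hLUk, sub_mul, one_mul, Matrix.smul_mul, mul_add, mul_one, hXX]
    match_scalars
    · ring
    · linear_combination -halpha
  have h1 : (1 + S * T) * (L22 * U22) = 1 := by
    rw [hLUk, mul_sub, mul_one, Matrix.mul_smul, add_mul, one_mul, hXX]
    match_scalars
    · ring
    · linear_combination -halpha
  have hLdet : IsUnit L22.det := by
    have h := congrArg Matrix.det h2
    rw [Matrix.det_mul, Matrix.det_mul, Matrix.det_one, mul_assoc] at h
    exact isUnit_iff_exists_inv.mpr ⟨_, h⟩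
  have hLiL : L22⁻¹ * L22 = 1 := Matrix.nonsing_inv_mul _ hLdet
  have hLLi : L22 * L22⁻¹ = 1 := Matrix.mul_nonsing_inv _ hLdet
  have hUdet : IsUnit U22.det := (Matrix.isUnit_iff_isUnit_det _).mp hU22unit
  have hUiU : U22⁻¹ * U22 = 1 := Matrix.nonsing_inv_mul _ hUdet
  have hUUi : U22 * U22⁻¹ = 1 := Matrix.mul_nonsing_inv _ hUdet
  have hsc : 1 - (u1⁻¹ * l1⁻¹) * ts = (u1 * l1)⁻¹ := by
    field_simp
    linear_combination hl1u1ts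
  have hLUS : (L22 * U22) * S = (u1 * l1)⁻¹ • S := by
    rw [hLUk, Matrix.sub_mul, Matrix.one_mul, Matrix.smul_mul, Matrix.mul_assoc, hSTS, smul_smul, ← hsc]
    match_scalars
    ring
  have hUS : U22 * S = (u1 * l1)⁻¹ • (L22⁻¹ * S) := by
    have h3 : L22⁻¹ * ((L22 * U22) * S) = U22 * S := by
      rw [Matrix.mul_assoc L22 U22 S, ← Matrix.mul_assoc, hLiL, Matrix.one_mul]
    rw [← h3, hLUS, Matrix.mul_smul]
  -- explicit right inverse of G
  have hGGinv : G * ((fromBlocks (1 : Matrix (Fin 1) (Fin 1) ℂ) (-T) S 1 *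
      fromBlocks ((u1 * l1)⁻¹ • (1 : Matrix (Fin 1) (Fin 1) ℂ)) 0 0 (L22 * U22)) *
      fromBlocks (l1 • (1 : Matrix (Fin 1) (Fin 1) ℂ)) 0 0 U22⁻¹) = 1 := by
    rw [hG]
    simp only [fromBlocks_multiply, Matrix.mul_one, Matrix.one_mul, Matrix.mul_zero,
      Matrix.zero_mul, add_zero, zero_add, Matrix.neg_mul, Matrix.mul_neg, neg_neg,
      Matrix.smul_mul, Matrix.mul_smul, smul_smul, smul_neg, neg_zero, smul_zero]
    rw [← fromBlocks_one, fromBlocks_inj]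
    refine ⟨?_, ?_, ?_, ?_⟩
    · rw [hts]
      match_scalars
      field_simp
      linear_combination (-1 : ℂ) * hl1u1ts
    · simp [Matrix.mul_assoc]
    · simp
    · have e4 : U22 * S * (T * (L22 * U22) * U22⁻¹) + U22 * (L22 * U22 * U22⁻¹) =
          U22 * ((1 + S * T) * (L22 * U22)) * U22⁻¹ := by
        simp [Matrix.add_mul, Matrix.mul_add, Matrix.mul_assoc, Matrix.one_mul, add_comm]
      rw [e4, h1, Matrix.mul_one, hUUi]
  have hGinv : G⁻¹ = (fromBlocks (1 : Matrix (Fin 1) (Fin 1) ℂ) (-T) S 1 *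
      fromBlocks ((u1 * l1)⁻¹ • (1 : Matrix (Fin 1) (Fin 1) ℂ)) 0 0 (L22 * U22)) *
      fromBlocks (l1 • (1 : Matrix (Fin 1) (Fin 1) ℂ)) 0 0 U22⁻¹ :=
    Matrix.inv_eq_right_inv hGGinv
  have hGGi : G * G⁻¹ = 1 := by rw [hGinv]; exact hGGinv
  have key0 : G * A0 = fromBlocks (lam • (1 : Matrix (Fin 1) (Fin 1) ℂ))
      (-(l1⁻¹ • (T * R * U22⁻¹))) 0 (U22 * B * U22⁻¹) * G := by
    rw [hG, hA0]
    simp only [fromBlocks_multiply, Matrix.mul_one, Matrix.one_mul, Matrix.mul_zero,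
      Matrix.zero_mul, add_zero, zero_add, Matrix.neg_mul, Matrix.mul_neg, neg_neg,
      Matrix.smul_mul, Matrix.mul_smul, smul_smul, smul_neg, neg_zero, smul_zero]
    rw [fromBlocks_inj]
    refine ⟨?_, ?_, ?_, ?_⟩
    · rw [Matrix.mul_assoc (T * R) U22⁻¹ (U22 * S), ← Matrix.mul_assoc U22⁻¹ U22 S, hUiU,
        Matrix.one_mul, Matrix.mul_assoc T R S, hRS, mul_comm lam l1⁻¹]
    · rw [Matrix.mul_assoc (T * R) U22⁻¹ U22, hUiU, Matrix.mul_one, hRdef, Matrix.mul_sub,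
        Matrix.mul_smul, Matrix.mul_one]
      module
    · rw [Matrix.mul_assoc (U22 * B) U22⁻¹ (U22 * S), ← Matrix.mul_assoc U22⁻¹ U22 S, hUiU,
        Matrix.one_mul, ← hRS, hRdef, Matrix.sub_mul, Matrix.smul_mul, Matrix.one_mul,
        Matrix.mul_sub, Matrix.mul_smul, Matrix.mul_assoc U22 B S]
      abel
    · rw [Matrix.mul_assoc (U22 * B) U22⁻¹ U22, hUiU, Matrix.mul_one]
  have key1 : G * A1 = fromBlocks (mu • (1 : Matrix (Fin 1) (Fin 1) ℂ)) 0
      (-(u1⁻¹ • (L22⁻¹ * Q * R⁻¹ * b))) (L22⁻¹ * C * L22) * G := by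
    rw [hG, hA1]
    simp only [fromBlocks_multiply, Matrix.mul_one, Matrix.one_mul, Matrix.mul_zero,
      Matrix.zero_mul, add_zero, zero_add, Matrix.neg_mul, Matrix.mul_neg, neg_neg,
      Matrix.smul_mul, Matrix.mul_smul, smul_smul, smul_neg, neg_zero, smul_zero]
    rw [fromBlocks_inj]
    refine ⟨?_, ?_, ?_, ?_⟩
    · rw [mul_comm]
    · rw [← hTQ, hQdef, Matrix.mul_sub, Matrix.mul_smul, Matrix.mul_one]
      module
    · have hLQS : L22⁻¹ * Q * R⁻¹ * b = L22⁻¹ * (Q * S) := by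
        rw [Matrix.mul_assoc (L22⁻¹ * Q) R⁻¹ b, ← hSdef, Matrix.mul_assoc]
      have hCLUS : L22⁻¹ * C * L22 * (U22 * S) = (u1 * l1)⁻¹ • (L22⁻¹ * (C * S)) := by
        rw [Matrix.mul_assoc (L22⁻¹ * C) L22 (U22 * S), ← Matrix.mul_assoc L22 U22 S, hLUS,
          Matrix.mul_smul, Matrix.mul_assoc]
      rw [hLQS, hCLUS, hUS, hQdef, Matrix.sub_mul, Matrix.smul_mul, Matrix.one_mul,
        Matrix.mul_sub, Matrix.mul_smul]
      match_scalars <;> field_simp <;> first | (left; ring) | ring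
    · have hcL : ∀ X Y : Matrix (Fin k) (Fin k) ℂ, L22 * X = L22 * Y → X = Y := by
        intro X Y h
        have h2' := congrArg (fun M => L22⁻¹ * M) h
        simpa only [← Matrix.mul_assoc, hLiL, Matrix.one_mul] using h2'
      apply hcL
      have hp1 : L22 * (U22 * S * cT) = (u1 * l1)⁻¹ • (S * cT) := by
        rw [← Matrix.mul_assoc L22 (U22 * S) cT, ← Matrix.mul_assoc L22 U22 S, hLUS,
          Matrix.smul_mul]
      have hp2 : L22 * (U22 * C) = C - (u1⁻¹ * l1⁻¹) • (S * (T * C)) := by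
        rw [← Matrix.mul_assoc, hLUk, Matrix.sub_mul, Matrix.one_mul, Matrix.smul_mul,
          Matrix.mul_assoc]
      have hp3 : L22 * (L22⁻¹ * Q * R⁻¹ * b * T) = Q * (S * T) := by
        rw [Matrix.mul_assoc (L22⁻¹ * Q) R⁻¹ b, ← hSdef, Matrix.mul_assoc L22⁻¹ Q S,
          Matrix.mul_assoc L22⁻¹ (Q * S) T, ← Matrix.mul_assoc L22 L22⁻¹ _, hLLi,
          Matrix.one_mul, Matrix.mul_assoc]
      have hp4 : L22 * (L22⁻¹ * C * L22 * U22) = C * (L22 * U22) := by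
        rw [Matrix.mul_assoc (L22⁻¹ * C) L22 U22, Matrix.mul_assoc L22⁻¹ C (L22 * U22),
          ← Matrix.mul_assoc L22 L22⁻¹ _, hLLi, Matrix.one_mul]
      rw [Matrix.mul_add, Matrix.mul_add, Matrix.mul_neg, Matrix.mul_neg, Matrix.mul_smul,
        hp1, hp2, hp3, hp4, hLUk, ← hTQ, hQdef]
      simp only [Matrix.mul_sub, Matrix.sub_mul, Matrix.mul_smul, Matrix.smul_mul,
        Matrix.mul_one, Matrix.one_mul, Matrix.mul_assoc]
      match_scalars <;> field_simp <;> first | (left; ring) | ring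
  constructor
  · rw [key0, Matrix.mul_assoc, hGGi, Matrix.mul_one]
  · rw [key1, Matrix.mul_assoc, hGGi, Matrix.mul_one]
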